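/- Let H : ℝ^P → ℝ be a twice-differentiable k-homogeneous function (k ≥ 2) and let ρ ∈ S^{P−1} satisfy ∇H(ρ) = −sρ with s > 0. Then: for k = 2 and any T ∈ ℝ, the path θ(t) = e^{s(t+T)}ρ defined on all of ℝ solves θ'(t) = −∇H(θ(t)) and θ(t) → 0 as t → −∞; for k > 2 and any T ∈ ℝ, the path θ(t) = ((k−2)s(T−t))^{−1/(k−2)}ρ defined on (−∞, T) solves θ'(t) = −∇H(θ(t)) and θ(t) → 0 as t → −∞. -/

import Mathlib

noncomputable section

lemma grad_hom_scale {P k : ℕ} (hk : 1 ≤ k)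
    (H : EuclideanSpace ℝ (Fin P) → ℝ) (hH : ContDiff ℝ 2 H)
    (hhom : ∀ α : ℝ, 0 < α → ∀ θ : EuclideanSpace ℝ (Fin P), H (α • θ) = α ^ k * H θ)
    (α : ℝ) (hα : 0 < α) (θ : EuclideanSpace ℝ (Fin P)) :
    gradient H (α • θ) = α ^ (k - 1) • gradient H θ := by
  have hd : ∀ x, HasFDerivAt H (fderiv ℝ H x) x := fun x =>
    (hH.differentiable two_ne_zero x).hasFDerivAt
  have hsm : HasFDerivAt (fun x : EuclideanSpace ℝ (Fin P) => α • x)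
      (α • ContinuousLinearMap.id ℝ (EuclideanSpace ℝ (Fin P))) θ :=
    (hasFDerivAt_id θ).const_smul α
  have h1 : HasFDerivAt (fun x => H (α • x))
      ((fderiv ℝ H (α • θ)).comp (α • ContinuousLinearMap.id ℝ (EuclideanSpace ℝ (Fin P)))) θ :=
    (hd (α • θ)).comp θ hsm
  have h2 : HasFDerivAt (fun x => α ^ k * H x) ((α ^ k) • fderiv ℝ H θ) θ :=
    (hd θ).const_smul (α ^ k)
  have hfun : (fun x : EuclideanSpace ℝ (Fin P) => H (α • x)) = fun x => α ^ k * H x := by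
    funext x; exact hhom α hα x
  rw [hfun] at h1
  have heq := h1.unique h2
  have heq' : α • fderiv ℝ H (α • θ) = (α ^ k) • fderiv ℝ H θ := by
    rw [← heq]; ext v; simp [mul_comm]
  have hfd : fderiv ℝ H (α • θ) = (α ^ (k - 1)) • fderiv ℝ H θ := by
    have := congrArg (fun L => α⁻¹ • L) heq'
    simpa [smul_smul, inv_mul_cancel₀ hα.ne', pow_sub₀ α hα.ne' hk, pow_one, mul_comm,
      div_eq_mul_inv] using this
  unfold gradient
  rw [hfd, map_smul]

theorem escape_path_along_escape_direction
    (P k : ℕ) (hk : 2 ≤ k)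
    (H : EuclideanSpace ℝ (Fin P) → ℝ) (hH : ContDiff ℝ 2 H)
    (hhom : ∀ α : ℝ, 0 < α → ∀ θ : EuclideanSpace ℝ (Fin P), H (α • θ) = α ^ k * H θ)
    (ρ : EuclideanSpace ℝ (Fin P)) (s : ℝ) (hρ : ‖ρ‖ = 1) (hs : 0 < s)
    (hdir : gradient H ρ = (-s) • ρ) :
    (k = 2 → ∀ T : ℝ,
      (∀ t : ℝ, HasDerivAt (fun t : ℝ => Real.exp (s * (t + T)) • ρ)
          (-(gradient H (Real.exp (s * (t + T)) • ρ))) t) ∧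
      Filter.Tendsto (fun t : ℝ => Real.exp (s * (t + T)) • ρ) Filter.atBot (nhds 0)) ∧
    (2 < k → ∀ T : ℝ,
      (∀ t : ℝ, t < T → HasDerivAt
          (fun t : ℝ => ((((k : ℝ) - 2) * s * (T - t)) ^ (-(1 / ((k : ℝ) - 2)))) • ρ)
          (-(gradient H (((((k : ℝ) - 2) * s * (T - t)) ^ (-(1 / ((k : ℝ) - 2)))) • ρ))) t) ∧
      Filter.Tendsto
        (fun t : ℝ => ((((k : ℝ) - 2) * s * (T - t)) ^ (-(1 / ((k : ℝ) - 2)))) • ρ)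
        Filter.atBot (nhds 0)) := by
  constructor
  · intro hk2 T
    subst hk2
    constructor
    · intro t
      have hc : (0:ℝ) < Real.exp (s * (t + T)) := Real.exp_pos _
      have hg : gradient H (Real.exp (s * (t + T)) • ρ)
          = (-(Real.exp (s * (t + T)) * s)) • ρ := by
        rw [grad_hom_scale (by norm_num) H hH hhom _ hc ρ, hdir]
        simp [smul_smul]
      rw [hg]
      have hd : HasDerivAt (fun t : ℝ => Real.exp (s * (t + T)))
          (Real.exp (s * (t + T)) * (s * 1)) t :=
        (((hasDerivAt_id t).add_const T).const_mul s).exp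
      have := hd.smul_const ρ
      rw [mul_one] at this
      rw [neg_smul, neg_neg]
      exact this
    · have h1 : Filter.Tendsto (fun t : ℝ => Real.exp (s * (t + T)))
          Filter.atBot (nhds 0) := by
        apply Real.tendsto_exp_atBot.comp
        exact (Filter.tendsto_atBot_add_const_right _ T Filter.tendsto_id).const_mul_atBot hs
      have := h1.smul_const ρ
      simpa using this
  · intro hk2 T
    have hkR : (2:ℝ) < (k:ℝ) := by exact_mod_cast hk2
    have hk2ne : (k:ℝ) - 2 ≠ 0 := by linarith
    set p : ℝ := 1 / ((k:ℝ) - 2) with hp_def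
    have hk2pos : 0 < (k:ℝ) - 2 := by linarith
    have hp : 0 < p := by positivity
    have hC : 0 < ((k:ℝ) - 2) * s := by positivity
    constructor
    · intro t ht
      have hu : 0 < ((k:ℝ) - 2) * s * (T - t) := by
        apply mul_pos hC; linarith
      set u : ℝ := ((k:ℝ) - 2) * s * (T - t) with hu_def
      have hc : 0 < u ^ (-p) := Real.rpow_pos_of_pos hu _
      have hg : gradient H ((u ^ (-p)) • ρ) = (-(s * u ^ (-p - 1))) • ρ := by
        rw [grad_hom_scale (by omega) H hH hhom _ hc ρ, hdir]
        rw [smul_smul, ← Real.rpow_natCast (u ^ (-p)) (k - 1), ← Real.rpow_mul hu.le]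
        have hcast : ((k - 1 : ℕ) : ℝ) = (k:ℝ) - 1 := by
          have : (1:ℕ) ≤ k := by omega
          push_cast [this]; ring
        rw [hcast]
        have hexp : -p * ((k:ℝ) - 1) = -p - 1 := by
          rw [hp_def]; field_simp; ring
        rw [hexp]; ring_nf
      rw [hg]
      have hdu : HasDerivAt (fun t : ℝ => ((k:ℝ) - 2) * s * (T - t))
          (((k:ℝ) - 2) * s * (-1)) t :=
        ((hasDerivAt_id t).const_sub T).const_mul _
      have hdc : HasDerivAt (fun t : ℝ => (((k:ℝ) - 2) * s * (T - t)) ^ (-p))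
          ((((k:ℝ) - 2) * s * (-1)) * (-p) * u ^ (-p - 1)) t :=
        hdu.rpow_const (Or.inl hu.ne')
      have := hdc.smul_const ρ
      have hkp : ((k:ℝ) - 2) * p = 1 := by rw [hp_def]; field_simp
      have hsc : (((k:ℝ) - 2) * s * (-1)) * (-p) * u ^ (-p - 1) = s * u ^ (-p - 1) := by
        linear_combination (s * u ^ (-p - 1)) * hkp
      rw [neg_smul, neg_neg, ← hsc]
      exact this
    · have h0 : Filter.Tendsto (fun t : ℝ => T - t) Filter.atBot Filter.atTop := by
        simpa [sub_eq_add_neg] using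
          Filter.tendsto_atTop_add_const_left Filter.atBot T
            (Filter.tendsto_neg_atBot_atTop (G := ℝ))
      have h1 : Filter.Tendsto (fun t : ℝ => ((k:ℝ) - 2) * s * (T - t))
          Filter.atBot Filter.atTop := h0.const_mul_atTop hC
      have h2 : Filter.Tendsto (fun t : ℝ => (((k:ℝ) - 2) * s * (T - t)) ^ (-p))
          Filter.atBot (nhds 0) :=
        (tendsto_rpow_neg_atTop hp).comp h1
      have := h2.smul_const ρ
      simpa using this
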